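/- Let K : (0,∞) → ℝ be continuous with K ≥ 0, and suppose h : (0,∞) → ℝ is C¹ with h'(t) = h(t)² + K(t) and 0 ≤ h(t) ≤ 1/t for all t > 0 (the limiting case B = 0 of the barrier estimate). Then for all 0 < a < b, ∫_a^b t K(t) dt ≤ 1 + (1/4) log(b/a). -/

import Mathlib

open Real Set MeasureTheory intervalIntegral

/-- Limiting case `B = 0`: if `h' = h² + K` with `K ≥ 0` and `0 ≤ h(t) ≤ 1/t`, then
for all `0 < a < b`, `∫_a^b t K(t) dt ≤ 1 + (1/4) log(b/a)`. -/
theorem stmt6 (K h : ℝ → ℝ)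
    (hK : ContinuousOn K (Ioi 0))
    (hK0 : ∀ t ∈ Ioi (0 : ℝ), 0 ≤ K t)
    (hh : ∀ t ∈ Ioi (0 : ℝ), HasDerivAt h (h t ^ 2 + K t) t)
    (hbound : ∀ t ∈ Ioi (0 : ℝ), 0 ≤ h t ∧ h t ≤ 1 / t)
    (a b : ℝ) (ha : 0 < a) (hab : a < b) :
    ∫ t in a..b, t * K t ≤ 1 + (1 / 4) * Real.log (b / a) := by
  have hb : (0:ℝ) < b := ha.trans hab
  have hsub : Icc a b ⊆ Ioi 0 := fun t ht => lt_of_lt_of_le ha ht.1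
  have hle : a ≤ b := hab.le
  have huIcc : uIcc a b = Icc a b := uIcc_of_le hle
  -- derivative of t * h t
  have hg' : ∀ t ∈ Ioi (0:ℝ), HasDerivAt (fun t => t * h t)
      (h t + t * (h t ^ 2 + K t)) t := by
    intro t ht
    have := (hasDerivAt_id t).fun_mul (hh t ht)
    simpa using this
  have hhcont : ContinuousOn h (Icc a b) :=
    fun t ht => ((hh t (hsub ht)).continuousAt).continuousWithinAt
  have hKcont : ContinuousOn K (Icc a b) := hK.mono hsub
  have I1 : IntervalIntegrable (fun t => t * K t) volume a b := by
    apply ContinuousOn.intervalIntegrable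
    rw [huIcc]
    exact continuousOn_id.mul hKcont
  have I2 : IntervalIntegrable (fun t => h t + t * (h t ^ 2 + K t)) volume a b := by
    apply ContinuousOn.intervalIntegrable
    rw [huIcc]
    exact hhcont.add (continuousOn_id.mul ((hhcont.pow 2).add hKcont))
  have hFTC : ∫ t in a..b, (h t + t * (h t ^ 2 + K t)) = b * h b - a * h a := by
    apply intervalIntegral.integral_eq_sub_of_hasDerivAt
    · intro t ht
      exact hg' t (hsub (huIcc ▸ ht))
    · exact I2
  have hmono : ∫ t in a..b, t * K t ≤ ∫ t in a..b, (h t + t * (h t ^ 2 + K t)) := by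
    apply intervalIntegral.integral_mono_on hle I1 I2
    intro t ht
    have ht0 : 0 < t := hsub ht
    have h1 := (hbound t (hsub ht)).1
    nlinarith [sq_nonneg (h t), mul_nonneg ht0.le (sq_nonneg (h t))]
  have hbb : b * h b ≤ 1 := by
    have := (hbound b (mem_Ioi.mpr hb)).2
    calc b * h b ≤ b * (1 / b) := by
          exact mul_le_mul_of_nonneg_left this hb.le
      _ = 1 := by field_simp
  have haa : 0 ≤ a * h a := mul_nonneg ha.le (hbound a (mem_Ioi.mpr ha)).1
  have hlog : 0 ≤ Real.log (b / a) :=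
    Real.log_nonneg ((one_le_div ha).mpr hle)
  calc ∫ t in a..b, t * K t ≤ b * h b - a * h a := hFTC ▸ hmono
    _ ≤ 1 := by linarith
    _ ≤ 1 + (1 / 4) * Real.log (b / a) := by linarith
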